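/- For every symmetric operad O, the object 1 is indecomposable in the Lawvere theory P(O): if morphisms p : 1 → m and p' : 1 → m' exhibit 1 as the product m × m', then m = 0 or m' = 0. -/

import Mathlib

/-- One step of the lexicographic decomposition of a sigma of `Fin`s. -/
def finSigmaSucc {k : ℕ} (ns : Fin (k + 1) → ℕ) :
    (Σ i : Fin (k + 1), Fin (ns i)) ≃ (Fin (ns 0) ⊕ Σ i : Fin k, Fin (ns i.succ)) where
  toFun p := Fin.cases (motive := fun i => Fin (ns i) → Fin (ns 0) ⊕ Σ i : Fin k, Fin (ns i.succ))
      (fun j => Sum.inl j) (fun i j => Sum.inr ⟨i, j⟩) p.1 p.2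
  invFun q := q.elim (fun j => ⟨0, j⟩) (fun q => ⟨q.1.succ, q.2⟩)
  left_inv := by rintro ⟨i, j⟩; induction i using Fin.cases <;> simp
  right_inv := by rintro (j | ⟨i, j⟩) <;> simp

/-- The lexicographic identification of `Σ i, Fin (ns i)` with `Fin (∑ i, ns i)`. -/
def finSigma : ∀ {k : ℕ} (ns : Fin k → ℕ), (Σ i : Fin k, Fin (ns i)) ≃ Fin (∑ i, ns i)
  | 0, ns => (Equiv.equivOfIsEmpty _ _ : (Σ i : Fin 0, Fin (ns i)) ≃ Fin 0).trans
      (finCongr (by simp))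
  | k + 1, ns =>
    (finSigmaSucc ns).trans <|
      ((Equiv.refl (Fin (ns 0))).sumCongr (finSigma fun i => ns i.succ)).trans <|
        finSumFinEquiv.trans (finCongr (Fin.sum_univ_succ ns).symm)

/-- Operadic composition of permutations: on the lexicographic block decomposition,
`⟨i, r⟩ ↦ ⟨τ i, σs (τ i) r⟩`. -/
def symComp {k : ℕ} (ns : Fin k → ℕ) (σs : ∀ i, Equiv.Perm (Fin (ns i)))
    (τ : Equiv.Perm (Fin k)) : Equiv.Perm (Fin (∑ i, ns i)) :=
  (finCongr (Equiv.sum_comp τ ns)).symm.trans <|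
    ((finSigma fun i => ns (τ i)).symm.trans
      ((Equiv.sigmaCongr τ fun i => σs (τ i)).trans (finSigma ns)))

/-- A symmetric operad. -/
structure SymOperad where
  ops : ℕ → Type
  unit : ops 1
  comp : ∀ {k : ℕ} (ns : Fin k → ℕ), (∀ i, ops (ns i)) → ops k → ops (∑ i, ns i)
  act : ∀ {n : ℕ}, Equiv.Perm (Fin n) → ops n → ops n
  act_one : ∀ {n : ℕ} (x : ops n), act (Equiv.refl (Fin n)) x = x
  act_mul : ∀ {n : ℕ} (σ τ : Equiv.Perm (Fin n)) (x : ops n),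
    act (σ * τ) x = act σ (act τ x)
  comp_unit_left : ∀ {n : ℕ} (g : ops n),
    HEq (comp (fun _ : Fin n => 1) (fun _ => unit) g) g
  comp_unit_right : ∀ {n : ℕ} (g : ops n),
    HEq (comp (fun _ : Fin 1 => n) (fun _ => g) unit) g
  comp_assoc : ∀ {k : ℕ} (ns : Fin k → ℕ) (ms : ∀ i, Fin (ns i) → ℕ)
    (hs : ∀ i j, ops (ms i j)) (gs : ∀ i, ops (ns i)) (f : ops k),
    HEq (comp (fun p => ms ((finSigma ns).symm p).1 ((finSigma ns).symm p).2)
          (fun p => hs ((finSigma ns).symm p).1 ((finSigma ns).symm p).2)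
          (comp ns gs f))
        (comp (fun i => ∑ j, ms i j) (fun i => comp (ms i) (hs i) (gs i)) f)
  equiv_inner : ∀ {k : ℕ} (ns : Fin k → ℕ) (σs : ∀ i, Equiv.Perm (Fin (ns i)))
    (gs : ∀ i, ops (ns i)) (f : ops k),
    comp ns (fun i => act (σs i) (gs i)) f
      = act (symComp ns σs (Equiv.refl (Fin k))) (comp ns gs f)
  equiv_outer : ∀ {k : ℕ} (ns : Fin k → ℕ) (τ : Equiv.Perm (Fin k))
    (gs : ∀ i, ops (ns i)) (f : ops k),
    HEq (comp (fun i => ns (τ i)) (fun i => gs (τ i)) (act τ f))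
        (act (symComp ns (fun i => Equiv.refl (Fin (ns i))) τ) (comp ns gs f))

/-- Composition `a ∗ b` of unary operations of an operad. -/
def SymOperad.comp1 (O : SymOperad) (a b : O.ops 1) : O.ops 1 :=
  cast (congrArg O.ops (by simp)) (O.comp (fun _ : Fin 1 => 1) (fun _ => a) b)

/-- Composition `⟨c 1, …, c r⟩ ∗ h` of an `r`-ary operation with unary operations. -/
def SymOperad.unaryComp (O : SymOperad) {r : ℕ} (c : Fin r → O.ops 1) (h : O.ops r) :
    O.ops r :=
  cast (congrArg O.ops (by simp)) (O.comp (fun _ : Fin r => 1) c h)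
/-- A Lawvere theory: a category with objects the natural numbers where `n` is the
`n`-fold power of `1` with chosen projections.  `comp f g` is `f` followed by `g`. -/
structure LawTheory where
  Hom : ℕ → ℕ → Type
  id : ∀ n : ℕ, Hom n n
  comp : ∀ {a b c : ℕ}, Hom a b → Hom b c → Hom a c
  id_comp : ∀ {a b : ℕ} (f : Hom a b), comp (id a) f = f
  comp_id : ∀ {a b : ℕ} (f : Hom a b), comp f (id b) = f
  assoc : ∀ {a b c d : ℕ} (f : Hom a b) (g : Hom b c) (h : Hom c d),
    comp (comp f g) h = comp f (comp g h)
  proj : ∀ (n : ℕ), Fin n → Hom n 1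
  tuple : ∀ {a n : ℕ}, (Fin n → Hom a 1) → Hom a n
  tuple_proj : ∀ {a n : ℕ} (fs : Fin n → Hom a 1) (i : Fin n),
    comp (tuple fs) (proj n i) = fs i
  tuple_eta : ∀ {a n : ℕ} (g : Hom a n),
    tuple (fun i => comp g (proj n i)) = g

namespace LawTheory

variable (T : LawTheory)

/-- The structural morphism `π_φ : n → m` induced by a function `φ : (m] → (n]`. -/
def pi {n m : ℕ} (φ : Fin m → Fin n) : T.Hom n m :=
  T.tuple fun i => T.proj n (φ i)

/-- The product map `f₁ × ⋯ × f_k : ∑ ns i → k` of operations `fs i : ns i → 1`,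
formed via the chosen projections and the lexicographic block decomposition. -/
def prodMap {k : ℕ} (ns : Fin k → ℕ) (fs : ∀ i, T.Hom (ns i) 1) :
    T.Hom (∑ i, ns i) k :=
  T.tuple fun i => T.comp (T.pi fun j : Fin (ns i) => finSigma ns ⟨i, j⟩) (fs i)

/-- Operadic composition of the operations of a Lawvere theory:
`⟨f₁,…,f_k⟩ ∗ f = f ∘ (f₁ × ⋯ × f_k)`. -/
def opComp {k : ℕ} (ns : Fin k → ℕ) (fs : ∀ i, T.Hom (ns i) 1) (f : T.Hom k 1) :
    T.Hom (∑ i, ns i) 1 :=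
  T.comp (T.prodMap ns fs) f

/-- The action `σ · f = f ∘ π_σ` of a permutation on an operation. -/
def opAct {n : ℕ} (σ : Equiv.Perm (Fin n)) (f : T.Hom n 1) : T.Hom n 1 :=
  T.comp (T.pi ⇑σ) f

/-- A morphism `f : a → b` is invertible (an isomorphism). -/
def IsInvertible {a b : ℕ} (f : T.Hom a b) : Prop :=
  ∃ g : T.Hom b a, T.comp f g = T.id a ∧ T.comp g f = T.id b

/-- Structural morphisms: the closure under isomorphism of the image of the unique
interpretation from the initial Lawvere theory `𝔽ᵒᵖ`. -/
def Structural {n m : ℕ} (f : T.Hom n m) : Prop :=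
  ∃ (φ : Fin m → Fin n) (u : T.Hom n n) (v : T.Hom m m),
    T.IsInvertible u ∧ T.IsInvertible v ∧ f = T.comp u (T.comp (T.pi φ) v)

/-- `e` is left orthogonal to `m`: unique diagonal fillers exist. -/
def Orthogonal {a b c d : ℕ} (e : T.Hom a b) (m : T.Hom c d) : Prop :=
  ∀ (u : T.Hom a c) (v : T.Hom b d), T.comp u m = T.comp e v →
    ∃! w : T.Hom b c, T.comp e w = u ∧ T.comp w m = v

/-- Analytic morphisms: those right orthogonal to all structural morphisms. -/
def Analytic {c d : ℕ} (f : T.Hom c d) : Prop :=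
  ∀ {a b : ℕ} (e : T.Hom a b), T.Structural e → T.Orthogonal e f

/-- The canonical map `ρ_n : S_n × Aut(1)ⁿ → Hom(n,n)`,
`(σ, a) ↦ (a₁ × ⋯ × a_n) ∘ π_σ`. -/
def rho (n : ℕ)
    (p : Equiv.Perm (Fin n) × (Fin n → {f : T.Hom 1 1 // T.IsInvertible f})) :
    T.Hom n n :=
  T.comp (T.pi ⇑p.1) (T.tuple fun i => T.comp (T.proj n i) (p.2 i).1)

/-- `T` has simple automorphisms: each `ρ_n` is a bijection onto the automorphisms. -/
def HasSimpleAut : Prop :=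
  ∀ n : ℕ, Function.Injective (T.rho n) ∧
    Set.range (T.rho n) = {f : T.Hom n n | T.IsInvertible f}

/-- `T` is an analytic Lawvere theory: structural and analytic morphisms form a
factorization system and `T` has simple automorphisms. -/
def IsAnalyticTheory : Prop :=
  (∀ {n m : ℕ} (f : T.Hom n m), ∃ (k : ℕ) (e : T.Hom n k) (g : T.Hom k m),
      T.Structural e ∧ T.Analytic g ∧ f = T.comp e g) ∧ T.HasSimpleAut

end LawTheory

/-- A morphism of symmetric operads. -/
structure OperadHom (O O' : SymOperad) where
  map : ∀ n : ℕ, O.ops n → O'.ops n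
  map_unit : map 1 O.unit = O'.unit
  map_comp : ∀ {k : ℕ} (ns : Fin k → ℕ) (gs : ∀ i, O.ops (ns i)) (f : O.ops k),
    map _ (O.comp ns gs f) = O'.comp ns (fun i => map _ (gs i)) (map k f)
  map_act : ∀ {n : ℕ} (σ : Equiv.Perm (Fin n)) (x : O.ops n),
    map n (O.act σ x) = O'.act σ (map n x)

/-- An interpretation of Lawvere theories: an identity-on-objects functor
preserving the chosen projections. -/
structure LawHom (T T' : LawTheory) where
  map : ∀ {a b : ℕ}, T.Hom a b → T'.Hom a b
  map_id : ∀ n : ℕ, map (T.id n) = T'.id n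
  map_comp : ∀ {a b c : ℕ} (f : T.Hom a b) (g : T.Hom b c),
    map (T.comp f g) = T'.comp (map f) (map g)
  map_proj : ∀ (n : ℕ) (i : Fin n), map (T.proj n i) = T'.proj n i

/-- `S` is the symmetric operad of operations of the Lawvere theory `T`. -/
def IsOperadOf (T : LawTheory) (S : SymOperad) : Prop :=
  S.ops = (fun n => T.Hom n 1) ∧ HEq S.unit (T.id 1) ∧
    HEq (@SymOperad.comp S) (@LawTheory.opComp T) ∧
    HEq (@SymOperad.act S) (@LawTheory.opAct T)
/-- A span `(φ, f, (g_i))` with codomain component `1`: an operation of the span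
Lawvere theory `P(O)`, given by an arity `r`, a function leg `φ : (r] → (n]` and an
operation `g ∈ O_r`. -/
def PreOp (O : SymOperad) (n : ℕ) : Type := Σ r : ℕ, (Fin r → Fin n) × O.ops r

/-- Equivalence of spans: `(φ, g) ∼ (φ ∘ σ, σ⁻¹ · g)`. -/
def PreRel (O : SymOperad) (n : ℕ) : PreOp O n → PreOp O n → Prop := fun x y =>
  ∃ σ : Equiv.Perm (Fin x.1), y = ⟨x.1, x.2.1 ∘ ⇑σ, O.act σ⁻¹ x.2.2⟩

/-- Morphism components of the span Lawvere theory: equivalence classes of spans. -/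
def SpanOp (O : SymOperad) (n : ℕ) : Type := Quot (PreRel O n)

/-- Composition of spans: pullback of the monotone leg along the function leg
together with operadic composition. -/
def compPre (O : SymOperad) {n m : ℕ} (x : PreOp O m) (y : Fin m → PreOp O n) :
    PreOp O n :=
  ⟨∑ l, (y (x.2.1 l)).1,
   fun p => (y (x.2.1 ((finSigma _).symm p).1)).2.1 ((finSigma _).symm p).2,
   O.comp (fun l => (y (x.2.1 l)).1) (fun l => (y (x.2.1 l)).2.2) x.2.2⟩

/-- An identification of a Lawvere theory `T` with the span Lawvere theory `P(O)`
of a symmetric operad `O`: morphisms `n → m` are `m`-tuples of equivalence classes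
of spans, and identities, projections, tupling and composition are computed by the
span formulas. -/
structure SpanModel (O : SymOperad) (T : LawTheory) where
  e : ∀ {n m : ℕ}, T.Hom n m ≃ (Fin m → SpanOp O n)
  id_eq : ∀ n : ℕ, e (T.id n) = fun i => Quot.mk _ ⟨1, fun _ => i, O.unit⟩
  proj_eq : ∀ (n : ℕ) (i : Fin n),
    e (T.proj n i) = fun _ : Fin 1 => Quot.mk _ ⟨1, fun _ => i, O.unit⟩
  tuple_eq : ∀ {a n : ℕ} (fs : Fin n → T.Hom a 1),
    e (T.tuple fs) = fun i => e (fs i) 0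
  comp_eq : ∀ {n m k : ℕ} (f : T.Hom n m) (g : T.Hom m k)
    (y : Fin m → PreOp O n) (x : Fin k → PreOp O m),
    (∀ i, e f i = Quot.mk _ (y i)) → (∀ j, e g j = Quot.mk _ (x j)) →
    ∀ j, e (T.comp f g) j = Quot.mk _ (compPre O (x j) y)

namespace OneIndecAux

/-- The arity of a span class: an invariant. -/
def ar (O : SymOperad) {n : ℕ} : SpanOp O n → ℕ :=
  Quot.lift (fun x => x.1) (by rintro x y ⟨σ, rfl⟩; rfl)

/-- Whether a span class uses the variable `t`: an invariant. -/
def uses (O : SymOperad) {n : ℕ} (t : Fin n) : SpanOp O n → Prop :=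
  Quot.lift (fun x => ∃ i, x.2.1 i = t) (by
    rintro ⟨r, φ, g⟩ y ⟨σ, rfl⟩
    refine propext ⟨fun ⟨i, hi⟩ => ⟨σ.symm i, ?_⟩, fun ⟨i, hi⟩ => ⟨σ i, hi⟩⟩
    simpa using hi)

/-- `compPre` as a function of `y ∘ x.2.1`. -/
def spanF (O : SymOperad) {n s : ℕ} (h : O.ops s) (z : Fin s → PreOp O n) : PreOp O n :=
  ⟨∑ l, (z l).1,
   fun p => (z ((finSigma fun l => (z l).1).symm p).1).2.1
     ((finSigma fun l => (z l).1).symm p).2,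
   O.comp (fun l => (z l).1) (fun l => (z l).2.2) h⟩

lemma compPre_eq_spanF (O : SymOperad) {n m : ℕ} (x : PreOp O m) (y : Fin m → PreOp O n) :
    compPre O x y = spanF O x.2.2 (fun l => y (x.2.1 l)) := rfl

lemma compPre_indep (O : SymOperad) {n m : ℕ} (x : PreOp O m) (hx : x.1 = 0)
    (y y' : Fin m → PreOp O n) : compPre O x y = compPre O x y' := by
  rw [compPre_eq_spanF, compPre_eq_spanF]
  exact congrArg _ (funext fun l => absurd l.isLt (by omega))

lemma e_comp_const (O : SymOperad) (T : LawTheory) (M : SpanModel O T) {μ : ℕ}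
    (q : T.Hom 1 μ) (x : Fin μ → PreOp O 1)
    (hx : ∀ j, Quot.mk _ (x j) = M.e q j)
    (w : T.Hom 2 1) (yw : PreOp O 2) (hyw : M.e w 0 = Quot.mk _ yw) (j : Fin μ) :
    M.e (T.comp w q) j = Quot.mk _ (compPre O (x j) (fun _ => yw)) :=
  M.comp_eq w q (fun _ => yw) x
    (fun i => by rw [Subsingleton.elim i 0]; exact hyw)
    (fun j => (hx j).symm) j

lemma proj_filler (O : SymOperad) (T : LawTheory) (M : SpanModel O T) {μ : ℕ}
    (q : T.Hom 1 μ) (x : Fin μ → PreOp O 1)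
    (hx : ∀ j, Quot.mk _ (x j) = M.e q j)
    (jA : Fin μ) (hjA : (x jA).1 ≠ 0)
    (w : T.Hom 2 1) (yw : PreOp O 2) (hyw : M.e w 0 = Quot.mk _ yw)
    (t t' : Fin 2) (ht : t' ≠ t)
    (hcomp : T.comp w q = T.comp (T.proj 2 t) q) :
    yw.1 = 1 ∧ ∀ i : Fin yw.1, yw.2.1 i ≠ t' := by
  have e1 : Quot.mk (PreRel O 2) (compPre O (x jA) (fun _ => yw))
      = Quot.mk (PreRel O 2)
        (compPre O (x jA) (fun _ => (⟨1, fun _ => t, O.unit⟩ : PreOp O 2))) := by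
    rw [← e_comp_const O T M q x hx w yw hyw jA,
      ← e_comp_const O T M q x hx (T.proj 2 t) ⟨1, fun _ => t, O.unit⟩
        (congrFun (M.proj_eq 2 t) 0) jA, hcomp]
  have hA : (∑ _l : Fin (x jA).1, yw.1) = ∑ _l : Fin (x jA).1, (1 : ℕ) :=
    congrArg (ar O) e1
  rw [Finset.sum_const, Finset.sum_const, Finset.card_univ, Fintype.card_fin,
    smul_eq_mul, smul_eq_mul, mul_one] at hA
  have hr : yw.1 = 1 :=
    Nat.eq_of_mul_eq_mul_left (Nat.pos_of_ne_zero hjA) (by rw [mul_one]; exact hA)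
  refine ⟨hr, fun i hi => ?_⟩
  have hU : (∃ pp : Fin (∑ _l : Fin (x jA).1, yw.1),
      yw.2.1 (((finSigma fun _l : Fin (x jA).1 => yw.1).symm pp).2) = t')
      = (∃ _pp : Fin (∑ _l : Fin (x jA).1, (1 : ℕ)), t = t') :=
    congrArg (uses O t') e1
  have lA : Fin (x jA).1 := ⟨0, Nat.pos_of_ne_zero hjA⟩
  have hL : ∃ pp : Fin (∑ _l : Fin (x jA).1, yw.1),
      yw.2.1 (((finSigma fun _l : Fin (x jA).1 => yw.1).symm pp).2) = t' :=
    ⟨finSigma (fun _l : Fin (x jA).1 => yw.1) ⟨lA, i⟩,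
      by rw [Equiv.symm_apply_apply]; exact hi⟩
  obtain ⟨_, hbad⟩ := hU ▸ hL
  exact ht hbad.symm

lemma zero_case (O : SymOperad) (T : LawTheory) (M : SpanModel O T) {μ : ℕ}
    (q : T.Hom 1 μ) (hμ : μ ≠ 0) (x : Fin μ → PreOp O 1)
    (hx : ∀ j, Quot.mk _ (x j) = M.e q j) (hz : ∀ j, (x j).1 = 0)
    (hex : ∀ u : T.Hom 2 μ, ∃ w : T.Hom 2 1, T.comp w q = u) : False := by
  obtain ⟨w1, hw1⟩ := hex (M.e.symm fun _ => Quot.mk _ ⟨1, fun _ => (0 : Fin 2), O.unit⟩)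
  obtain ⟨w2, hw2⟩ := hex (M.e.symm fun _ => Quot.mk _ ⟨1, fun _ => (1 : Fin 2), O.unit⟩)
  obtain ⟨y1, hy1⟩ := Quot.exists_rep (M.e w1 0)
  obtain ⟨y2, hy2⟩ := Quot.exists_rep (M.e w2 0)
  have hconst : T.comp w1 q = T.comp w2 q := by
    apply M.e.injective
    funext j
    rw [e_comp_const O T M q x hx w1 y1 hy1.symm j,
      e_comp_const O T M q x hx w2 y2 hy2.symm j]
    exact congrArg (Quot.mk _) (compPre_indep O (x j) (hz j) _ _)
  have hu : (fun _ : Fin μ => Quot.mk (PreRel O 2) ⟨1, fun _ => (0 : Fin 2), O.unit⟩)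
      = (fun _ : Fin μ => Quot.mk (PreRel O 2) ⟨1, fun _ => (1 : Fin 2), O.unit⟩) := by
    have h := congrArg M.e (hw1.symm.trans (hconst.trans hw2))
    exact M.e.symm.injective (hw1.symm.trans (hconst.trans hw2))
  have h0 := congrFun hu ⟨0, Nat.pos_of_ne_zero hμ⟩
  have hUU : (∃ _i : Fin 1, (0 : Fin 2) = 0) = (∃ _i : Fin 1, (1 : Fin 2) = 0) :=
    congrArg (uses O 0) h0
  have hR : ∃ _i : Fin 1, (1 : Fin 2) = 0 :=
    hUU ▸ (⟨(0 : Fin 1), rfl⟩ : ∃ _i : Fin 1, (0 : Fin 2) = 0)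
  obtain ⟨_, hbad⟩ := hR
  exact absurd hbad (by decide)

end OneIndecAux

/-- the object `1` is indecomposable in the span Lawvere theory `P(O)` of
any symmetric operad `O`: if `p : 1 → m` and `p' : 1 → m'` exhibit `1` as the product
`m × m'`, then `m = 0` or `m' = 0`. -/
theorem one_indecomposable_in_span_theory (O : SymOperad) (T : LawTheory)
    (M : SpanModel O T) (m m' : ℕ) (p : T.Hom 1 m) (p' : T.Hom 1 m')
    (hprod : ∀ (a : ℕ) (u : T.Hom a m) (v : T.Hom a m'),
      ∃! w : T.Hom a 1, T.comp w p = u ∧ T.comp w p' = v) :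
    m = 0 ∨ m' = 0 := by
  open OneIndecAux in
  by_contra hcon
  push_neg at hcon
  obtain ⟨hm, hm'⟩ := hcon
  choose x hx using fun j => Quot.exists_rep (M.e p j)
  choose x' hx' using fun j => Quot.exists_rep (M.e p' j)
  by_cases hz : ∀ j, (x j).1 = 0
  · exact OneIndecAux.zero_case O T M p hm x hx hz (fun u => by
      obtain ⟨w, ⟨h1, _⟩, _⟩ := hprod 2 u (T.comp (T.proj 2 0) p')
      exact ⟨w, h1⟩)
  by_cases hz' : ∀ j, (x' j).1 = 0
  · exact OneIndecAux.zero_case O T M p' hm' x' hx' hz' (fun v => by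
      obtain ⟨w, ⟨_, h2⟩, _⟩ := hprod 2 (T.comp (T.proj 2 0) p) v
      exact ⟨w, h2⟩)
  push_neg at hz hz'
  obtain ⟨jA, hjA⟩ := hz
  obtain ⟨jB, hjB⟩ := hz'
  obtain ⟨w, ⟨hwp, hwp'⟩, _⟩ :=
    hprod 2 (T.comp (T.proj 2 0) p) (T.comp (T.proj 2 1) p')
  obtain ⟨yw, hyw⟩ := Quot.exists_rep (M.e w 0)
  obtain ⟨hr, hno1⟩ :=
    OneIndecAux.proj_filler O T M p x hx jA hjA w yw hyw.symm 0 1 (by decide) hwp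
  obtain ⟨-, hno0⟩ :=
    OneIndecAux.proj_filler O T M p' x' hx' jB hjB w yw hyw.symm 1 0 (by decide) hwp'
  have i0 : Fin yw.1 := ⟨0, by omega⟩
  have a1 : (yw.2.1 i0).val ≠ 1 := fun hh => hno1 i0 (Fin.ext hh)
  have a0 : (yw.2.1 i0).val ≠ 0 := fun hh => hno0 i0 (Fin.ext hh)
  have hlt : (yw.2.1 i0).val < 2 := (yw.2.1 i0).isLt
  omega
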